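/- For all real numbers x₀ and Δx with x₀ > 0 and 0 < Δx ≤ x₀, the quantity Φ(x₀) − (1/2)·(Φ(x₀+Δx) + Φ(x₀−Δx)) is at most Δx²/(2·√(2πe)). (This is the upper bound of order ‖Δμ‖² on the classifier bias Δ_g under attribute shifts in Proposition 2.) -/

import Mathlib

open MeasureTheory

/-- The standard normal CDF `Φ(x) = ∫_{t ≤ x} (2π)^{-1/2} exp(-t²/2) dt`. -/
noncomputable def stdNormalCDF (x : ℝ) : ℝ :=
  ∫ t in Set.Iic x, (Real.sqrt (2 * Real.pi))⁻¹ * Real.exp (-t ^ 2 / 2)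

noncomputable def stdPdf (t : ℝ) : ℝ := (Real.sqrt (2 * Real.pi))⁻¹ * Real.exp (-t ^ 2 / 2)

lemma stdPdf_integrable : Integrable stdPdf := by
  have h : Integrable (fun x : ℝ => Real.exp (-(1/2 : ℝ) * x ^ 2)) :=
    integrable_exp_neg_mul_sq (by norm_num)
  have := h.const_mul (Real.sqrt (2 * Real.pi))⁻¹
  convert this using 2 with t
  unfold stdPdf
  ring_nf

lemma stdPdf_hasDerivAt (x : ℝ) :
    HasDerivAt stdPdf ((Real.sqrt (2 * Real.pi))⁻¹ * (Real.exp (-x ^ 2 / 2) * (-x))) x := by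
  have h1 : HasDerivAt (fun t : ℝ => -t ^ 2 / 2) (-x) x := by
    have := ((hasDerivAt_pow 2 x).neg).div_const 2
    refine this.congr_deriv ?_
    push_cast; ring
  have h2 := (h1.exp)
  have := h2.const_mul (Real.sqrt (2 * Real.pi))⁻¹
  exact this

lemma deriv_bound (x : ℝ) :
    |(Real.sqrt (2 * Real.pi))⁻¹ * (Real.exp (-x ^ 2 / 2) * (-x))| ≤
      (Real.sqrt (2 * Real.pi * Real.exp 1))⁻¹ := by
  have h2pi : (0:ℝ) < 2 * Real.pi := by positivity
  have hs : (0:ℝ) < Real.sqrt (2 * Real.pi) := Real.sqrt_pos.2 h2pi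
  have key : |x| * Real.exp (-x ^ 2 / 2) ≤ Real.exp (-(1/2 : ℝ)) := by
    have hle : |x| ≤ Real.exp ((x ^ 2 - 1) / 2) := by
      have := Real.add_one_le_exp ((x ^ 2 - 1) / 2)
      nlinarith [sq_abs x, sq_nonneg (|x| - 1)]
    calc |x| * Real.exp (-x ^ 2 / 2)
        ≤ Real.exp ((x ^ 2 - 1) / 2) * Real.exp (-x ^ 2 / 2) :=
          mul_le_mul_of_nonneg_right hle (Real.exp_pos _).le
      _ = Real.exp (-(1/2 : ℝ)) := by rw [← Real.exp_add]; congr 1; ring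
  have hsqrt : Real.sqrt (2 * Real.pi * Real.exp 1) =
      Real.sqrt (2 * Real.pi) * Real.exp (1/2 : ℝ) := by
    rw [Real.sqrt_mul h2pi.le]
    congr 1
    have he : Real.exp 1 = Real.exp (1/2 : ℝ) * Real.exp (1/2 : ℝ) := by
      rw [← Real.exp_add]; norm_num
    rw [he, Real.sqrt_mul_self (Real.exp_pos _).le]
  rw [hsqrt, abs_mul, abs_mul, abs_of_pos (inv_pos.2 hs), abs_of_pos (Real.exp_pos _),
    mul_inv, ← Real.exp_neg]
  have : Real.exp (-x ^ 2 / 2) * |(-x)| ≤ Real.exp (-(1/2:ℝ)) := by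
    rw [abs_neg, mul_comm]; exact key
  calc (Real.sqrt (2 * Real.pi))⁻¹ * (Real.exp (-x ^ 2 / 2) * |(-x)|)
      ≤ (Real.sqrt (2 * Real.pi))⁻¹ * Real.exp (-(1/2:ℝ)) := by
        exact mul_le_mul_of_nonneg_left this (inv_pos.2 hs).le
    _ = (Real.sqrt (2 * Real.pi))⁻¹ * Real.exp (-(1/2:ℝ)) := rfl

lemma pointwise_bound (Δx : ℝ) (hΔ : 0 < Δx) (t : ℝ) :
    stdPdf t - stdPdf (t + Δx) ≤ Δx * (Real.sqrt (2 * Real.pi * Real.exp 1))⁻¹ := by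
  have hlt : t < t + Δx := by linarith
  obtain ⟨c, _, hc⟩ := exists_hasDerivAt_eq_slope stdPdf
      (fun x => (Real.sqrt (2 * Real.pi))⁻¹ * (Real.exp (-x ^ 2 / 2) * (-x))) hlt
      (fun x _ => (stdPdf_hasDerivAt x).continuousAt.continuousWithinAt)
      (fun x _ => stdPdf_hasDerivAt x)
  have hb := deriv_bound c
  have hd : t + Δx - t = Δx := by ring
  rw [hd] at hc
  have heq : stdPdf (t + Δx) - stdPdf t =
      ((Real.sqrt (2 * Real.pi))⁻¹ * (Real.exp (-c ^ 2 / 2) * (-c))) * Δx := by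
    rw [hc]; field_simp
  have : stdPdf t - stdPdf (t + Δx) =
      -((Real.sqrt (2 * Real.pi))⁻¹ * (Real.exp (-c ^ 2 / 2) * (-c))) * Δx := by
    linarith [heq]
  rw [this]
  have h1 : -((Real.sqrt (2 * Real.pi))⁻¹ * (Real.exp (-c ^ 2 / 2) * (-c))) ≤
      (Real.sqrt (2 * Real.pi * Real.exp 1))⁻¹ := by
    have := neg_abs_le ((Real.sqrt (2 * Real.pi))⁻¹ * (Real.exp (-c ^ 2 / 2) * (-c)))
    linarith [neg_le_abs ((Real.sqrt (2 * Real.pi))⁻¹ * (Real.exp (-c ^ 2 / 2) * (-c)))]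
  nlinarith

/-- **Proposition 2, upper bound on the classifier bias.**
For `x₀ > 0` and `0 < Δx ≤ x₀`,
`Φ(x₀) - ½(Φ(x₀+Δx) + Φ(x₀-Δx)) ≤ Δx² / (2√(2πe))`. -/
theorem classifier_bias_upper_bound (x₀ Δx : ℝ) (hx₀ : 0 < x₀) (hΔ : 0 < Δx) (hΔle : Δx ≤ x₀) :
    stdNormalCDF x₀ - (1 / 2) * (stdNormalCDF (x₀ + Δx) + stdNormalCDF (x₀ - Δx)) ≤
      Δx ^ 2 / (2 * Real.sqrt (2 * Real.pi * Real.exp 1)) := by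
  have hint := stdPdf_integrable
  have hCDF : ∀ a b : ℝ, stdNormalCDF b - stdNormalCDF a = ∫ t in a..b, stdPdf t := by
    intro a b
    exact intervalIntegral.integral_Iic_sub_Iic hint.integrableOn hint.integrableOn
  have hA : stdNormalCDF x₀ - stdNormalCDF (x₀ - Δx) = ∫ t in (x₀ - Δx)..x₀, stdPdf t :=
    hCDF _ _
  have hB : stdNormalCDF (x₀ + Δx) - stdNormalCDF x₀ = ∫ t in x₀..(x₀ + Δx), stdPdf t :=
    hCDF _ _
  have hshift : (∫ t in x₀..(x₀ + Δx), stdPdf t) =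
      ∫ t in (x₀ - Δx)..x₀, stdPdf (t + Δx) := by
    rw [intervalIntegral.integral_comp_add_right (fun t => stdPdf t) Δx]
    norm_num
  have hint2 : Integrable (fun t => stdPdf (t + Δx)) := hint.comp_add_right Δx
  have hab : x₀ - Δx ≤ x₀ := by linarith
  have hsub : (∫ t in (x₀ - Δx)..x₀, stdPdf t) - (∫ t in (x₀ - Δx)..x₀, stdPdf (t + Δx)) =
      ∫ t in (x₀ - Δx)..x₀, (stdPdf t - stdPdf (t + Δx)) := by
    rw [intervalIntegral.integral_sub hint.intervalIntegrable hint2.intervalIntegrable]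
  have hmono : (∫ t in (x₀ - Δx)..x₀, (stdPdf t - stdPdf (t + Δx))) ≤
      ∫ _t in (x₀ - Δx)..x₀, Δx * (Real.sqrt (2 * Real.pi * Real.exp 1))⁻¹ := by
    apply intervalIntegral.integral_mono_on hab
      (hint.intervalIntegrable.sub hint2.intervalIntegrable)
      (intervalIntegrable_const)
    intro t _
    exact pointwise_bound Δx hΔ t
  have hconst : (∫ _t in (x₀ - Δx)..x₀, Δx * (Real.sqrt (2 * Real.pi * Real.exp 1))⁻¹)
      = Δx * (Δx * (Real.sqrt (2 * Real.pi * Real.exp 1))⁻¹) := by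
    rw [intervalIntegral.integral_const, smul_eq_mul]
    ring
  have hspos : (0:ℝ) < Real.sqrt (2 * Real.pi * Real.exp 1) := by positivity
  have hfinal : stdNormalCDF x₀ - (1 / 2) * (stdNormalCDF (x₀ + Δx) + stdNormalCDF (x₀ - Δx))
      = (1/2) * ((∫ t in (x₀ - Δx)..x₀, stdPdf t) - (∫ t in (x₀ - Δx)..x₀, stdPdf (t + Δx))) := by
    rw [← hshift]
    linarith [hA, hB]
  rw [hfinal, hsub]
  rw [hconst] at hmono
  rw [show Δx ^ 2 / (2 * Real.sqrt (2 * Real.pi * Real.exp 1)) =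
      (1/2) * (Δx * (Δx * (Real.sqrt (2 * Real.pi * Real.exp 1))⁻¹)) by field_simp]
  linarith
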